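/- arXiv:2004.05926 — 3 statements merged into one kernel-verified Lean document; each statement's English description precedes it below -/
import Mathlib

section
/- Let $X\subset B(\mathbf{0},1/2)\subset\mathbb{R}^d$ be a compact set which is uniformly sparse: for each $\epsilon>0$ there is $C$ such that for all integers $N\geq C$ and all $x\in X$, $\#\{k\in[1,N]: X\cap(B(x,2^{-k})\setminus B(x,2^{-k-1}))\neq\emptyset\}\leq\epsilon N$. Then for each $\epsilon'>0$ there is a constant $C'$ (depending only on $d$, $\epsilon'$, and the sparseness modulus) such that $N(X,r)\leq C'r^{-\epsilon'}$ for all $r\in(0,1)$. In particular, the upper box dimension of $X$ is zero. -/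
open Metric
open scoped Classical

/-- A closed cube in `ℝ^d` with lower-left corner `x` and side length `r`. -/
def closedCube {d : ℕ} (x : EuclideanSpace ℝ (Fin d)) (r : ℝ) :
    Set (EuclideanSpace ℝ (Fin d)) :=
  {y | ∀ i, y i ∈ Set.Icc (x i) (x i + r)}

lemma coord_le_dist (d : ℕ) (x y : EuclideanSpace ℝ (Fin d)) (i : Fin d) : |x i - y i| ≤ dist x y := by
  rw [EuclideanSpace.dist_eq]
  calc |x i - y i| = Real.sqrt ((x i - y i)^2) := (Real.sqrt_sq_eq_abs _).symm
  _ ≤ _ := by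
      apply Real.sqrt_le_sqrt
      have h := Finset.single_le_sum (f := fun j => dist (x j) (y j) ^2) (fun j _ => sq_nonneg _) (Finset.mem_univ i)
      simpa [Real.dist_eq, sq_abs] using h


lemma ballCover (d : ℕ) : ∃ c : ℕ, 0 < c ∧ ∀ (x : EuclideanSpace ℝ (Fin d)) (R : ℝ), 0 < R →
    ∃ f : Fin c → EuclideanSpace ℝ (Fin d), closedBall x R ⊆ ⋃ i, closedBall (f i) (R/16) := by
  obtain ⟨t, -, htf, hcov⟩ := (isCompact_closedBall (0 : EuclideanSpace ℝ (Fin d)) 1).finite_cover_balls (e := 1/32) (by norm_num)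
  have h0 : (0 : EuclideanSpace ℝ (Fin d)) ∈ closedBall (0:EuclideanSpace ℝ (Fin d)) 1 := by simp
  obtain ⟨y0, hy0, -⟩ := Set.mem_iUnion₂.1 (hcov h0)
  set T := htf.toFinset with hT
  have hTne : T.Nonempty := ⟨y0, htf.mem_toFinset.2 hy0⟩
  refine ⟨T.card, Finset.card_pos.2 hTne, fun x R hR => ?_⟩
  refine ⟨fun i => x + R • (T.equivFin.symm i : EuclideanSpace ℝ (Fin d)), fun z hz => ?_⟩
  have ha : R⁻¹ • (z - x) ∈ closedBall (0:EuclideanSpace ℝ (Fin d)) 1 := by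
    rw [mem_closedBall, dist_zero_right, norm_smul, norm_inv, Real.norm_of_nonneg hR.le]
    rw [mem_closedBall, dist_eq_norm] at hz
    rw [inv_mul_le_iff₀ hR, mul_one]
    exact hz
  obtain ⟨y, hy, hdy⟩ := Set.mem_iUnion₂.1 (hcov ha)
  have hyT : y ∈ T := htf.mem_toFinset.2 hy
  refine Set.mem_iUnion.2 ⟨T.equivFin ⟨y, hyT⟩, ?_⟩
  have : (T.equivFin.symm (T.equivFin ⟨y, hyT⟩) : EuclideanSpace ℝ (Fin d)) = y := by
    simp
  simp only [mem_closedBall]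
  rw [this]
  have : z = x + R • (R⁻¹ • (z - x)) := by
    rw [smul_smul, mul_inv_cancel₀ hR.ne', one_smul]; abel
  calc dist z (x + R • y) = dist (x + R • (R⁻¹ • (z - x))) (x + R • y) := by rw [← this]
  _ = dist (R • (R⁻¹ • (z - x))) (R • y) := dist_add_left _ _ _
  _ = |R| * dist (R⁻¹ • (z - x)) y := dist_smul₀ _ _ _
  _ ≤ R * (1/32) := by
      rw [abs_of_pos hR]
      exact mul_le_mul_of_nonneg_left (le_of_lt (by exact mem_ball.1 hdy)) hR.le
  _ ≤ R/16 := by linarith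


/-- `B` function: bound on cluster sizes. -/
def Bfun (N c j q : ℕ) : ℕ := ∑ ℓ ∈ Finset.range (q+1), c^ℓ * Nat.choose (N+1-j) ℓ

lemma sum_range_choose' (M ℓ : ℕ) : ∑ u ∈ Finset.range M, u.choose ℓ = M.choose (ℓ+1) := by
  induction M with
  | zero => simp
  | succ M ih => rw [Finset.sum_range_succ, ih, Nat.choose_succ_succ M ℓ, Nat.add_comm]

lemma one_le_Bfun (N c j q : ℕ) : 1 ≤ Bfun N c j q := by
  have h0 : (0:ℕ) ∈ Finset.range (q+1) := by simp
  calc 1 = c^0 * Nat.choose (N+1-j) 0 := by simp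
  _ ≤ _ := Finset.single_le_sum (f := fun ℓ => c^ℓ * Nat.choose (N+1-j) ℓ) (fun i _ => Nat.zero_le _) h0

lemma sum_Icc_reindex (j N ℓ : ℕ) (hjN : j ≤ N) :
    ∑ k ∈ Finset.Icc j N, (N-k).choose ℓ = ∑ u ∈ Finset.range (N+1-j), u.choose ℓ := by
  apply Finset.sum_nbij' (i := fun k => N - k) (j := fun u => N - u)
  · intro a ha
    simp only [Finset.mem_Icc] at ha
    simp only [Finset.mem_range]
    omega
  · intro a ha
    simp only [Finset.mem_range] at ha
    simp only [Finset.mem_Icc]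
    omega
  · intro a ha
    simp only [Finset.mem_Icc] at ha
    omega
  · intro a ha
    simp only [Finset.mem_range] at ha
    omega
  · intro a ha
    rfl

lemma Bfun_rec (N c j p : ℕ) (hjN : j ≤ N) :
    1 + ∑ k ∈ Finset.Icc j N, c * Bfun N c (k+1) p = Bfun N c j (p+1) := by
  have h1 : ∑ k ∈ Finset.Icc j N, c * Bfun N c (k+1) p
      = ∑ k ∈ Finset.Icc j N, ∑ ℓ ∈ Finset.range (p+1), c^(ℓ+1) * Nat.choose (N-k) ℓ := by
    apply Finset.sum_congr rfl
    intro k _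
    unfold Bfun
    rw [Finset.mul_sum]
    apply Finset.sum_congr rfl
    intro ℓ _
    have : N + 1 - (k+1) = N - k := by omega
    rw [this, pow_succ]
    ring
  rw [h1, Finset.sum_comm]
  have h2 : ∀ ℓ ∈ Finset.range (p+1), ∑ k ∈ Finset.Icc j N, c^(ℓ+1) * Nat.choose (N-k) ℓ
      = c^(ℓ+1) * Nat.choose (N+1-j) (ℓ+1) := by
    intro ℓ _
    rw [← Finset.mul_sum, sum_Icc_reindex j N ℓ hjN, sum_range_choose']
  rw [Finset.sum_congr rfl h2]
  unfold Bfun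
  rw [Finset.sum_range_succ' (fun ℓ => c^ℓ * Nat.choose (N+1-j) ℓ) (p+1)]
  simp [add_comm]


lemma pow_div_fact_mono (x : ℝ) (a b : ℕ) (hab : a ≤ b) (hbx : (b:ℝ) ≤ x) :
    x^a / (Nat.factorial a) ≤ x^b / (Nat.factorial b) := by
  induction b, hab using Nat.le_induction with
  | base => exact le_refl _
  | succ b hb ih =>
    have hb1 : ((b:ℝ)+1) ≤ x := by push_cast at hbx ⊢; linarith
    have hx0 : (0:ℝ) ≤ x := le_trans (by positivity) hb1
    have h1 : x^b / (Nat.factorial b) ≤ x^(b+1) / (Nat.factorial (b+1)) := by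
      rw [pow_succ, Nat.factorial_succ]
      rw [div_le_div_iff₀ (by positivity) (by positivity)]
      push_cast
      have h2 : (0:ℝ) ≤ x^b := by positivity
      have h3 : (0:ℝ) < (Nat.factorial b : ℝ) := by positivity
      nlinarith [mul_le_mul_of_nonneg_left hb1 (mul_nonneg h2 h3.le)]
    exact le_trans (ih (by push_cast at hbx ⊢; linarith)) h1

lemma pow_self_le_factorial_mul_exp (m : ℕ) : (m:ℝ)^m ≤ (Nat.factorial m) * Real.exp 1 ^ m := by
  induction m with
  | zero => simp
  | succ n ih =>
    rcases Nat.eq_zero_or_pos n with h | h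
    · subst h
      norm_num [Nat.factorial]
    · have hn : (0:ℝ) < n := by exact_mod_cast h
      have key : ((n:ℝ)+1)^n ≤ (n:ℝ)^n * Real.exp 1 := by
        have h1 : ((n:ℝ)+1)^n = (n:ℝ)^n * (1 + 1/n)^n := by
          rw [← mul_pow]; congr 1; field_simp
        have h2 : (1 + 1/(n:ℝ))^n ≤ Real.exp 1 := by
          have h3 : (1 + 1/(n:ℝ)) ≤ Real.exp (1/n) := by
            have := Real.add_one_le_exp (1/(n:ℝ))
            linarith
          calc (1 + 1/(n:ℝ))^n ≤ (Real.exp (1/n))^n := by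
                apply pow_le_pow_left₀ (by positivity) h3
          _ = Real.exp ((1/n) * n) := by rw [← Real.exp_nat_mul]; ring_nf
          _ = Real.exp 1 := by congr 1; field_simp
        rw [h1]
        have : (0:ℝ) ≤ (n:ℝ)^n := by positivity
        nlinarith
      have hexp : (0:ℝ) < Real.exp 1 ^ n := by positivity
      have hcast : ((n+1:ℕ):ℝ)^(n+1) = ((n:ℝ)+1)^(n+1) := by push_cast; ring
      rw [hcast]
      calc ((n:ℝ)+1)^(n+1) = ((n:ℝ)+1) * ((n:ℝ)+1)^n := by ring
      _ ≤ ((n:ℝ)+1) * ((n:ℝ)^n * Real.exp 1) := by nlinarith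
      _ ≤ ((n:ℝ)+1) * ((Nat.factorial n) * Real.exp 1 ^ n * Real.exp 1) := by
          have h5 : (0:ℝ) < (n:ℝ)+1 := by positivity
          have he : (0:ℝ) < Real.exp 1 := Real.exp_pos 1
          apply mul_le_mul_of_nonneg_left _ h5.le
          calc (n:ℝ)^n * Real.exp 1 ≤ ((Nat.factorial n) * Real.exp 1 ^ n) * Real.exp 1 :=
                mul_le_mul_of_nonneg_right ih he.le
          _ = (Nat.factorial n) * Real.exp 1 ^ n * Real.exp 1 := by ring
      _ = (Nat.factorial (n+1)) * Real.exp 1 ^ (n+1) := by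
          rw [Nat.factorial_succ]
          push_cast
          ring





lemma Bfun_le_real (N c j m : ℕ) (hm : 1 ≤ m) (hmx : (m:ℝ) ≤ (c:ℝ)*(N+1)) :
    (Bfun N c j m : ℝ) ≤ (m+1) * (Real.exp 1 * ((c:ℝ)*(N+1)) / m)^m := by
  have hm0 : (0:ℝ) < m := by exact_mod_cast hm
  have hx0 : (0:ℝ) < (c:ℝ)*(N+1) := lt_of_lt_of_le hm0 hmx
  have hc0 : 0 < c := by
    by_contra hcc
    push_neg at hcc
    interval_cases c
    simp at hx0
  have hc1 : (1:ℝ) ≤ (c:ℝ) := by exact_mod_cast hc0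
  set x : ℝ := (c:ℝ)*(N+1) with hx
  have hterm : ∀ ℓ ∈ Finset.range (m+1), ((c^ℓ * Nat.choose (N+1-j) ℓ : ℕ) : ℝ)
      ≤ (Real.exp 1 * x / m)^m := by
    intro ℓ hℓ
    have hℓm : ℓ ≤ m := by simpa using Nat.lt_succ_iff.mp (Finset.mem_range.mp hℓ)
    have h1 : ((c^ℓ * Nat.choose (N+1-j) ℓ : ℕ) : ℝ) ≤ (c:ℝ)^ℓ * ((N+1-j:ℕ)^ℓ / Nat.factorial ℓ) := by
      push_cast
      apply mul_le_mul_of_nonneg_left (Nat.choose_le_pow_div ℓ (N+1-j)) (by positivity)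
    have h2 : (c:ℝ)^ℓ * ((N+1-j:ℕ)^ℓ / Nat.factorial ℓ) ≤ x^ℓ / Nat.factorial ℓ := by
      rw [hx, ← mul_div_assoc, ← mul_pow]
      apply div_le_div_of_nonneg_right _ (by positivity)
      apply pow_le_pow_left₀ (by positivity)
      have h5 : ((N+1-j:ℕ):ℝ) ≤ ((N+1:ℕ):ℝ) := by exact_mod_cast Nat.sub_le (N+1) j
      have h6 : ((N+1:ℕ):ℝ) = (N:ℝ)+1 := by push_cast; ring
      rw [h6] at h5
      nlinarith [h5, hc1]
    have h3 : x^ℓ / Nat.factorial ℓ ≤ x^m / Nat.factorial m :=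
      pow_div_fact_mono x ℓ m hℓm hmx
    have h4 : x^m / Nat.factorial m ≤ (Real.exp 1 * x / m)^m := by
      rw [div_pow, div_le_div_iff₀ (by positivity) (by positivity)]
      have hmp : (Real.exp 1 * x)^m = Real.exp 1^m * x^m := mul_pow _ _ _
      rw [hmp]
      calc x^m * (m:ℝ)^m ≤ x^m * ((Nat.factorial m) * Real.exp 1 ^ m) :=
            mul_le_mul_of_nonneg_left (pow_self_le_factorial_mul_exp m) (by positivity)
      _ = Real.exp 1 ^ m * x ^ m * (Nat.factorial m) := by ring
    linarith
  calc (Bfun N c j m : ℝ) = ∑ ℓ ∈ Finset.range (m+1), ((c^ℓ * Nat.choose (N+1-j) ℓ : ℕ):ℝ) := by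
        unfold Bfun; push_cast; ring
  _ ≤ ∑ _ℓ ∈ Finset.range (m+1), (Real.exp 1 * x / m)^m := Finset.sum_le_sum hterm
  _ = (m+1) * (Real.exp 1 * x / m)^m := by
      rw [Finset.sum_const, Finset.card_range]
      push_cast; ring


lemma eps_choice (a β : ℝ) (ha : 1 ≤ a) (hβ : 1 < β) :
    ∃ ε : ℝ, 0 < ε ∧ ε ≤ 1 ∧ (a/ε) ^ (ε:ℝ) ≤ β := by
  have hla : 0 ≤ Real.log a := Real.log_nonneg ha
  have hlβ : 0 < Real.log β := Real.log_pos hβ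
  set ε := min 1 (min (Real.log β/(2*(Real.log a + 1))) ((Real.log β/4)^2)) with hε
  have hε0 : 0 < ε := by
    apply lt_min (by norm_num)
    exact lt_min (by positivity) (by positivity)
  have hε1 : ε ≤ 1 := min_le_left _ _
  refine ⟨ε, hε0, hε1, ?_⟩
  have ha0 : 0 < a := lt_of_lt_of_le one_pos ha
  have haε : 0 < a/ε := by positivity
  rw [Real.rpow_def_of_pos haε]
  rw [← Real.exp_log (lt_trans one_pos hβ)]
  apply Real.exp_le_exp.mpr
  have hsq : Real.sqrt ε > 0 := Real.sqrt_pos.mpr hε0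
  have hlogdiv : Real.log (a/ε) = Real.log a - Real.log ε := Real.log_div ha0.ne' hε0.ne'
  have hlogε : Real.log ε = 2 * Real.log (Real.sqrt ε) := by
    conv_lhs => rw [← Real.mul_self_sqrt hε0.le]
    rw [Real.log_mul hsq.ne' hsq.ne']
    ring
  have hneg : -Real.log (Real.sqrt ε) ≤ 1/Real.sqrt ε := by
    have h1 : Real.log (1/Real.sqrt ε) ≤ 1/Real.sqrt ε - 1 :=
      Real.log_le_sub_one_of_pos (by positivity)
    rw [one_div, Real.log_inv] at h1
    rw [one_div]
    linarith
  have key1 : ε * (-Real.log ε) ≤ 2 * Real.sqrt ε := by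
    rw [hlogε]
    have h2 : ε * (2 * (-Real.log (Real.sqrt ε))) ≤ ε * (2 * (1/Real.sqrt ε)) := by
      apply mul_le_mul_of_nonneg_left _ hε0.le
      linarith
    have h3 : ε * (2 * (1/Real.sqrt ε)) = 2 * (ε / Real.sqrt ε) := by ring
    have h4 : ε / Real.sqrt ε = Real.sqrt ε := Real.div_sqrt
    nlinarith
  have key2 : ε * Real.log a ≤ Real.log β / 2 := by
    have hεle : ε ≤ Real.log β/(2*(Real.log a + 1)) := le_trans (min_le_right _ _) (min_le_left _ _)
    have h5 : ε * Real.log a ≤ (Real.log β/(2*(Real.log a + 1))) * Real.log a :=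
      mul_le_mul_of_nonneg_right hεle hla
    have h6 : (Real.log β/(2*(Real.log a + 1))) * Real.log a ≤ Real.log β / 2 := by
      rw [div_mul_eq_mul_div, div_le_div_iff₀ (by positivity) (by norm_num)]
      nlinarith
    linarith
  have key3 : 2 * Real.sqrt ε ≤ Real.log β / 2 := by
    have hεle : ε ≤ (Real.log β/4)^2 := le_trans (min_le_right _ _) (min_le_right _ _)
    have h7 : Real.sqrt ε ≤ Real.log β / 4 := by
      calc Real.sqrt ε ≤ Real.sqrt ((Real.log β/4)^2) := Real.sqrt_le_sqrt hεle
      _ = Real.log β / 4 := Real.sqrt_sq (by positivity)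
    linarith
  calc Real.log (a/ε) * ε = ε * Real.log a + ε * (-Real.log ε) := by rw [hlogdiv]; ring
  _ ≤ Real.log β / 2 + 2 * Real.sqrt ε := by linarith
  _ ≤ Real.log β := by linarith

lemma nat_le_geom (b : ℝ) (hb : 1 < b) : ∃ Cb : ℝ, 0 < Cb ∧ ∀ N : ℕ, (N+1 : ℝ) ≤ Cb * b^N := by
  set η := min 1 (b-1) with hη
  have hη0 : 0 < η := lt_min one_pos (by linarith)
  have hη1 : η ≤ 1 := min_le_left _ _
  refine ⟨1/η, by positivity, fun N => ?_⟩
  have h1 : 1 + η ≤ b := by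
    have := min_le_right 1 (b-1)
    simp only [← hη] at this
    linarith
  have h2 : 1 + (N:ℝ)*η ≤ (1+η)^N := by
    have := one_add_mul_le_pow (a := η) (by linarith) N
    linarith [this]
  have h3 : (1+η)^N ≤ b^N := pow_le_pow_left₀ (by positivity) h1 N
  rw [div_mul_eq_mul_div, le_div_iff₀ hη0]
  nlinarith [h2, h3]


lemma exists_scale {δ : ℝ} {j N : ℕ} (h0 : 0 < δ) (h1 : δ ≤ (2:ℝ)^(-(j:ℤ)))
    (h2 : (2:ℝ)^(-(N:ℤ)) ≤ δ) :
    ∃ k : ℕ, j ≤ k ∧ k ≤ N ∧ (2:ℝ)^(-(k:ℤ)-1) < δ ∧ δ ≤ (2:ℝ)^(-(k:ℤ)) := by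
  have h2' : (1:ℝ) < 2 := one_lt_two
  have hjN : j ≤ N := by
    have h3 : (2:ℝ)^(-(N:ℤ)) ≤ (2:ℝ)^(-(j:ℤ)) := le_trans h2 h1
    have h4 := (zpow_le_zpow_iff_right₀ h2').mp h3
    omega
  refine ⟨Nat.findGreatest (fun k => δ ≤ (2:ℝ)^(-(k:ℤ))) N,
    Nat.le_findGreatest (P := fun k => δ ≤ (2:ℝ)^(-(k:ℤ))) hjN h1,
    Nat.findGreatest_le N, ?_,
    Nat.findGreatest_spec (P := fun k => δ ≤ (2:ℝ)^(-(k:ℤ))) hjN h1⟩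
  set k := Nat.findGreatest (fun k => δ ≤ (2:ℝ)^(-(k:ℤ))) N with hk
  rcases Nat.lt_or_ge k N with h | h
  · have hnP : ¬ (δ ≤ (2:ℝ)^(-((k+1:ℕ):ℤ))) :=
      Nat.findGreatest_is_greatest (Nat.lt_succ_self k) (by omega)
    have hnP' : (2:ℝ)^(-((k+1:ℕ):ℤ)) < δ := not_le.mp hnP
    calc (2:ℝ)^(-(k:ℤ)-1) = (2:ℝ)^(-((k+1:ℕ):ℤ)) := by push_cast; ring_nf
    _ < δ := hnP'
  · have hkNe : k = N := le_antisymm (Nat.findGreatest_le N) h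
    rw [hkNe]
    calc (2:ℝ)^(-(N:ℤ)-1) < (2:ℝ)^(-(N:ℤ)) := by
          apply zpow_lt_zpow_right₀ h2'
          omega
    _ ≤ δ := h2


lemma sep_card {E : Type*} [MetricSpace E] {S : Finset E} {A : Set E} {K : ℕ} {g : Fin K → E}
    {ρ δ : ℝ} (hSA : ∀ s ∈ S, s ∈ A) (hcov : A ⊆ ⋃ i, closedBall (g i) ρ)
    (hsep : ∀ a ∈ S, ∀ b ∈ S, a ≠ b → δ ≤ dist a b) (h2 : 2*ρ < δ) : S.card ≤ K := by
  rcases Nat.eq_zero_or_pos K with hK | hK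
  · subst hK
    rcases S.eq_empty_or_nonempty with h | ⟨s, hs⟩
    · simp [h]
    · exfalso
      obtain ⟨i, _⟩ := Set.mem_iUnion.mp (hcov (hSA s hs))
      exact i.elim0
  · have : Nonempty (Fin K) := ⟨⟨0, hK⟩⟩
    set φ : E → Fin K := fun s =>
      if h : ∃ i, s ∈ closedBall (g i) ρ then h.choose else Classical.arbitrary _ with hφ
    have hmem : ∀ s ∈ S, s ∈ closedBall (g (φ s)) ρ := by
      intro s hs
      have hex : ∃ i, s ∈ closedBall (g i) ρ := Set.mem_iUnion.mp (hcov (hSA s hs))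
      simp only [hφ, dif_pos hex]
      exact hex.choose_spec
    have hcard : S.card ≤ (Finset.univ : Finset (Fin K)).card := by
      apply Finset.card_le_card_of_injOn φ (fun a _ => Finset.mem_univ (φ a))
      intro a ha b hb hab
      by_contra hne
      have h3 := hsep a ha b hb hne
      have h4 := hmem a ha
      have h5 := hmem b hb
      rw [mem_closedBall] at h4 h5
      rw [hab] at h4
      have htri := dist_triangle a (g (φ b)) b
      rw [dist_comm (g (φ b)) b] at htri
      linarith
    simpa using hcard

lemma iterCover (d c : ℕ)
    (hcover : ∀ (x : EuclideanSpace ℝ (Fin d)) (R:ℝ), 0 < R →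
      ∃ f : Fin c → EuclideanSpace ℝ (Fin d), closedBall x R ⊆ ⋃ i, closedBall (f i) (R/16)) :
    ∀ t : ℕ, ∃ g : Fin (c^t) → EuclideanSpace ℝ (Fin d),
      closedBall (0:EuclideanSpace ℝ (Fin d)) 1 ⊆ ⋃ i, closedBall (g i) ((1/16:ℝ)^t) := by
  intro t
  induction t with
  | zero =>
    refine ⟨fun _ => 0, fun z hz => ?_⟩
    apply Set.mem_iUnion.mpr ⟨⟨0, by simpa using Nat.pos_of_ne_zero (by simp)⟩, by simpa using hz⟩
  | succ t ih =>
    obtain ⟨g, hg⟩ := ih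
    have hR : (0:ℝ) < (1/16:ℝ)^t := by positivity
    choose f hf using fun i => hcover (g i) ((1/16:ℝ)^t) hR
    refine ⟨fun idx => (fun p : Fin (c^t) × Fin c => f p.1 p.2)
      (finProdFinEquiv.symm (Fin.cast (pow_succ c t) idx)), fun z hz => ?_⟩
    obtain ⟨i, hi⟩ := Set.mem_iUnion.mp (hg hz)
    obtain ⟨jj, hj⟩ := Set.mem_iUnion.mp (hf i hi)
    refine Set.mem_iUnion.mpr ⟨Fin.cast (pow_succ c t).symm (finProdFinEquiv (i, jj)), ?_⟩
    have hcast : Fin.cast (pow_succ c t) (Fin.cast (pow_succ c t).symm (finProdFinEquiv (i, jj)))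
        = finProdFinEquiv (i, jj) := rfl
    simp only [hcast, Equiv.symm_apply_apply]
    have : (1/16:ℝ)^t / 16 = (1/16:ℝ)^(t+1) := by ring
    rw [← this]
    exact hj




noncomputable def Wset {d : ℕ} (X : Set (EuclideanSpace ℝ (Fin d))) (N : ℕ) (y : EuclideanSpace ℝ (Fin d)) :
    Finset ℕ :=
  (Finset.Icc 1 N).filter (fun k : ℕ =>
    (X ∩ (closedBall y ((2:ℝ)^(-(k:ℤ))) \ closedBall y ((2:ℝ)^(-(k:ℤ)-1)))).Nonempty)

lemma key (d N c m : ℕ) (X : Set (EuclideanSpace ℝ (Fin d)))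
    (hcover : ∀ (x : EuclideanSpace ℝ (Fin d)) (R:ℝ), 0 < R →
      ∃ f : Fin c → EuclideanSpace ℝ (Fin d), closedBall x R ⊆ ⋃ i, closedBall (f i) (R/16))
    (hsp : ∀ y ∈ X, (Wset X N y).card ≤ m) :
    ∀ t j, 1 ≤ j → N+1-j ≤ t →
    ∀ (L : Finset ℕ) (S : Finset (EuclideanSpace ℝ (Fin d))) (s₀ : EuclideanSpace ℝ (Fin d)),
      ↑S ⊆ X → s₀ ∈ S →
      (∀ a ∈ S, ∀ b ∈ S, a ≠ b → (2:ℝ)^(-(N:ℤ)) ≤ dist a b) →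
      (∀ y ∈ S, dist y s₀ ≤ (2:ℝ)^(-(j:ℤ))) →
      (∀ k ∈ L, k < j) →
      (∀ y ∈ S, L ⊆ Wset X N y) →
      S.card ≤ Bfun N c j (m - L.card) := by
  intro t
  induction t using Nat.strong_induction_on with
  | _ t IH =>
  intro j hj hjt L S s₀ hSX hs₀ hsep hrad hLj hLW
  by_cases hall : ∀ y ∈ S, y = s₀
  · have hsub : S ⊆ {s₀} := fun y hy => Finset.mem_singleton.mpr (hall y hy)
    calc S.card ≤ ({s₀} : Finset _).card := Finset.card_le_card hsub
    _ = 1 := Finset.card_singleton _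
    _ ≤ _ := one_le_Bfun N c j _
  · push_neg at hall
    obtain ⟨y₀, hy₀, hy₀ne⟩ := hall
    have hy₀X : y₀ ∈ X := hSX hy₀
    have hs₀X : s₀ ∈ X := hSX hs₀
    have hd₀ : 0 < dist y₀ s₀ := dist_pos.mpr hy₀ne
    obtain ⟨k₀, hk₀j, hk₀N, hk₀lo, hk₀hi⟩ :=
      exists_scale hd₀ (hrad y₀ hy₀) (hsep y₀ hy₀ s₀ hs₀ hy₀ne)
    have hjN : j ≤ N := le_trans hk₀j hk₀N
    have hk₀W : k₀ ∈ Wset X N y₀ := by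
      refine Finset.mem_filter.mpr ⟨Finset.mem_Icc.mpr ⟨by omega, hk₀N⟩, ⟨s₀, hs₀X, ?_, ?_⟩⟩
      · rw [mem_closedBall, dist_comm]; exact hk₀hi
      · rw [mem_closedBall, dist_comm]; exact not_le.mpr hk₀lo
    have hLcard : L.card < m := by
      have hk₀L : k₀ ∉ L := fun h => by have := hLj k₀ h; omega
      have hsub : insert k₀ L ⊆ Wset X N y₀ :=
        Finset.insert_subset hk₀W (hLW y₀ hy₀)
      have h1 := Finset.card_le_card hsub
      rw [Finset.card_insert_of_notMem hk₀L] at h1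
      have h2 := hsp y₀ hy₀X
      omega
    set p := m - L.card - 1 with hp
    set Sk : ℕ → Finset (EuclideanSpace ℝ (Fin d)) := fun k =>
      S.filter (fun y => (2:ℝ)^(-(k:ℤ)-1) < dist y s₀ ∧ dist y s₀ ≤ (2:ℝ)^(-(k:ℤ))) with hSk
    have hsub : S ⊆ insert s₀ ((Finset.Icc j N).biUnion Sk) := by
      intro y hy
      by_cases hys : y = s₀
      · simp [hys]
      · obtain ⟨k, hk1, hk2, hk3, hk4⟩ :=
          exists_scale (dist_pos.mpr hys) (hrad y hy) (hsep y hy s₀ hs₀ hys)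
        exact Finset.mem_insert_of_mem (Finset.mem_biUnion.mpr
          ⟨k, Finset.mem_Icc.mpr ⟨hk1, hk2⟩, Finset.mem_filter.mpr ⟨hy, hk3, hk4⟩⟩)
    have hcard1 : S.card ≤ 1 + ∑ k ∈ Finset.Icc j N, (Sk k).card := by
      calc S.card ≤ (insert s₀ ((Finset.Icc j N).biUnion Sk)).card := Finset.card_le_card hsub
      _ ≤ ((Finset.Icc j N).biUnion Sk).card + 1 := Finset.card_insert_le _ _
      _ ≤ 1 + ∑ k ∈ Finset.Icc j N, (Sk k).card := by
          rw [add_comm]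
          exact Nat.add_le_add_left Finset.card_biUnion_le 1
    have hSkb : ∀ k ∈ Finset.Icc j N, (Sk k).card ≤ c * Bfun N c (k+1) p := by
      intro k hk
      obtain ⟨hjk, hkN⟩ := Finset.mem_Icc.mp hk
      have hRpos : (0:ℝ) < (2:ℝ)^(-(k:ℤ)) := by positivity
      obtain ⟨f, hf⟩ := hcover s₀ _ hRpos
      set Ski : Fin c → Finset (EuclideanSpace ℝ (Fin d)) := fun i =>
        (Sk k).filter (fun y => y ∈ closedBall (f i) ((2:ℝ)^(-(k:ℤ))/16)) with hSki
      have hsub2 : Sk k ⊆ Finset.univ.biUnion Ski := by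
        intro y hy
        have hyb : y ∈ closedBall s₀ ((2:ℝ)^(-(k:ℤ))) := by
          rw [mem_closedBall]
          exact (Finset.mem_filter.mp hy).2.2
        obtain ⟨i, hi⟩ := Set.mem_iUnion.mp (hf hyb)
        exact Finset.mem_biUnion.mpr ⟨i, Finset.mem_univ i, Finset.mem_filter.mpr ⟨hy, hi⟩⟩
      have hbound : ∀ i : Fin c, (Ski i).card ≤ Bfun N c (k+1) p := by
        intro i
        rcases Finset.eq_empty_or_nonempty (Ski i) with he | ⟨s', hs'⟩
        · simp [he]
        · have hsml : ∀ y ∈ Ski i, dist y s' ≤ (2:ℝ)^(-((k+1:ℕ):ℤ)) := by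
            intro y hy
            have h1 : dist y (f i) ≤ (2:ℝ)^(-(k:ℤ))/16 := (Finset.mem_filter.mp hy).2
            have h2 : dist s' (f i) ≤ (2:ℝ)^(-(k:ℤ))/16 := (Finset.mem_filter.mp hs').2
            have h3 : (2:ℝ)^(-((k+1:ℕ):ℤ)) = (2:ℝ)^(-(k:ℤ)) * (2:ℝ)^(-1:ℤ) := by
              rw [← zpow_add₀ (two_ne_zero)]
              congr 1
              push_cast
              ring
            have h4 := dist_triangle y (f i) s'
            rw [dist_comm (f i) s'] at h4
            rw [h3]
            have h5 : (2:ℝ)^(-1:ℤ) = 1/2 := by norm_num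
            rw [h5]
            linarith
          have hZsub : ∀ y ∈ Ski i, y ∈ S := fun y hy =>
            Finset.mem_of_mem_filter y (Finset.mem_of_mem_filter y hy)
          have hins : k ∉ L := fun h => by have := hLj k h; omega
          have hres := IH (N+1-(k+1)) (by omega) (k+1) (by omega) (le_refl _)
            (insert k L) (Ski i) s'
            (fun y hy => hSX (hZsub y (Finset.mem_coe.mp hy)))
            hs'
            (fun a ha b hb hab => hsep a (hZsub a ha) b (hZsub b hb) hab)
            hsml
            (by
              intro k' hk'
              rcases Finset.mem_insert.mp hk' with h | h
              · omega
              · have := hLj k' h; omega)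
            (by
              intro y hy
              apply Finset.insert_subset
              · have hyS : y ∈ Sk k := Finset.mem_of_mem_filter y hy
                obtain ⟨-, hlo, hhi⟩ := Finset.mem_filter.mp hyS
                refine Finset.mem_filter.mpr ⟨Finset.mem_Icc.mpr ⟨by omega, hkN⟩,
                  ⟨s₀, hs₀X, ?_, ?_⟩⟩
                · rw [mem_closedBall, dist_comm]; exact hhi
                · rw [mem_closedBall, dist_comm]; exact not_le.mpr hlo
              · exact hLW y (hZsub y hy))
          rw [Finset.card_insert_of_notMem hins] at hres
          have heq : m - (L.card + 1) = p := by omega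
          rw [heq] at hres
          exact hres
      calc (Sk k).card ≤ (Finset.univ.biUnion Ski).card := Finset.card_le_card hsub2
      _ ≤ ∑ i : Fin c, (Ski i).card := Finset.card_biUnion_le
      _ ≤ ∑ _i : Fin c, Bfun N c (k+1) p := Finset.sum_le_sum (fun i _ => hbound i)
      _ = c * Bfun N c (k+1) p := by
          rw [Finset.sum_const, Finset.card_univ, Fintype.card_fin, smul_eq_mul]
    calc S.card ≤ 1 + ∑ k ∈ Finset.Icc j N, (Sk k).card := hcard1
    _ ≤ 1 + ∑ k ∈ Finset.Icc j N, c * Bfun N c (k+1) p :=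
        Nat.add_le_add_left (Finset.sum_le_sum hSkb) 1
    _ = Bfun N c j (p+1) := Bfun_rec N c j p hjN
    _ = Bfun N c j (m - L.card) := by
        congr 1
        omega



lemma radius_lt (N : ℕ) (hN : 1 ≤ N) : 2*((1/16:ℝ)^N) < (2:ℝ)^(-(N:ℤ)) := by
  have h1 : (2:ℝ)^(-(N:ℤ)) = (1/2:ℝ)^N := by
    rw [zpow_neg, zpow_natCast, one_div, inv_pow]
  have h2 : (1/16:ℝ)^N = (1/2:ℝ)^N * (1/8:ℝ)^N := by
    rw [← mul_pow]; norm_num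
  have h3 : (1/8:ℝ)^N ≤ (1/8:ℝ)^1 := pow_le_pow_of_le_one (by norm_num) (by norm_num) hN
  have h4 : (0:ℝ) < (1/2:ℝ)^N := by positivity
  rw [h1, h2]
  nlinarith

lemma exists_maximal_net (d c N : ℕ) (hN : 1 ≤ N) (X : Set (EuclideanSpace ℝ (Fin d)))
    (hXb : X ⊆ closedBall 0 (1/2))
    (hcover : ∀ (x : EuclideanSpace ℝ (Fin d)) (R:ℝ), 0 < R →
      ∃ f : Fin c → EuclideanSpace ℝ (Fin d), closedBall x R ⊆ ⋃ i, closedBall (f i) (R/16)) :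
    ∃ S : Finset (EuclideanSpace ℝ (Fin d)), ↑S ⊆ X ∧
      (∀ a ∈ S, ∀ b ∈ S, a ≠ b → (2:ℝ)^(-(N:ℤ)) ≤ dist a b) ∧
      (∀ x ∈ X, ∃ s ∈ S, dist x s < (2:ℝ)^(-(N:ℤ))) ∧ S.card ≤ c^N := by
  obtain ⟨g, hg⟩ := iterCover d c hcover N
  have hX1 : X ⊆ closedBall (0:EuclideanSpace ℝ (Fin d)) 1 :=
    hXb.trans (closedBall_subset_closedBall (by norm_num))
  have htb : ∀ T : Finset (EuclideanSpace ℝ (Fin d)), ↑T ⊆ X →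
      (∀ a ∈ T, ∀ b ∈ T, a ≠ b → (2:ℝ)^(-(N:ℤ)) ≤ dist a b) → T.card ≤ c^N := by
    intro T hTX hTsep
    exact sep_card (fun s hs => hX1 (hTX hs)) hg hTsep (radius_lt N hN)
  set P : ℕ → Prop := fun n => ∃ T : Finset (EuclideanSpace ℝ (Fin d)), ↑T ⊆ X ∧
    (∀ a ∈ T, ∀ b ∈ T, a ≠ b → (2:ℝ)^(-(N:ℤ)) ≤ dist a b) ∧ T.card = n with hPdef
  have hP0 : P 0 := ⟨∅, by simp, by simp, by simp⟩
  have hPn : P (Nat.findGreatest P (c^N)) :=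
    Nat.findGreatest_spec (Nat.zero_le _) hP0
  obtain ⟨T, hTX, hTsep, hTcard⟩ := hPn
  refine ⟨T, hTX, hTsep, ?_, htb T hTX hTsep⟩
  intro x hx
  by_contra hcon
  push_neg at hcon
  have hxT : x ∉ T := by
    intro hxT
    have h1 := hcon x hxT
    simp only [dist_self] at h1
    have h2 : (0:ℝ) < (2:ℝ)^(-(N:ℤ)) := by positivity
    linarith
  have hsep' : ∀ a ∈ insert x T, ∀ b ∈ insert x T, a ≠ b → (2:ℝ)^(-(N:ℤ)) ≤ dist a b := by
    intro a ha b hb hab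
    rcases Finset.mem_insert.mp ha with rfl | ha' <;> rcases Finset.mem_insert.mp hb with rfl | hb'
    · exact absurd rfl hab
    · exact hcon b hb'
    · rw [dist_comm]; exact hcon a ha'
    · exact hTsep a ha' b hb' hab
  have hins : ↑(insert x T) ⊆ X := by
    rw [Finset.coe_insert]
    exact Set.insert_subset hx hTX
  have hPn1 : P (Nat.findGreatest P (c^N) + 1) :=
    ⟨insert x T, hins, hsep', by rw [Finset.card_insert_of_notMem hxT, hTcard]⟩
  have hle : Nat.findGreatest P (c^N) + 1 ≤ c^N := by
    obtain ⟨T', hT'X, hT'sep, hT'card⟩ := hPn1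
    rw [← hT'card]
    exact htb T' hT'X hT'sep
  exact Nat.findGreatest_is_greatest (Nat.lt_succ_self _) hle hPn1





lemma cube_of_ball {d : ℕ} (s : EuclideanSpace ℝ (Fin d)) (r : ℝ) (hr : 0 < r)
    (x : EuclideanSpace ℝ (Fin d)) (hx : dist x s ≤ r) :
    ∃ v : Fin d → Bool,
      x ∈ closedCube (WithLp.toLp 2 (fun i => if v i then s i else s i - r)) r := by
  refine ⟨fun i => decide (s i ≤ x i), fun i => ?_⟩
  have h1 : |x i - s i| ≤ r := le_trans (coord_le_dist d x s i) hx
  rw [abs_le] at h1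
  simp only [PiLp.toLp_apply]
  by_cases h : s i ≤ x i
  · rw [show (decide (s i ≤ x i)) = true by simp [h]]
    simp only [if_true]
    exact Set.mem_Icc.mpr ⟨h, by linarith [h1.2]⟩
  · push_neg at h
    rw [show (decide (s i ≤ x i)) = false by simp [not_le.mpr h]]
    simp only [Bool.false_eq_true, if_false]
    exact Set.mem_Icc.mpr ⟨by linarith [h1.1], by linarith⟩

-- r and N relation
lemma rN_facts (r : ℝ) (hr0 : 0 < r) (hr1 : r < 1) :
    ∃ N : ℕ, 1 ≤ N ∧ (2:ℝ)^(-(N:ℤ)) ≤ r ∧ ((2:ℝ)^N : ℝ) ≤ 2/r := by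
  have hinv : (1:ℝ) < 1/r := by rw [lt_div_iff₀ hr0]; linarith
  have hlb0 : 0 ≤ Real.logb 2 (1/r) := Real.logb_nonneg one_lt_two hinv.le
  set N := ⌊Real.logb 2 (1/r)⌋₊ + 1 with hN
  have hfl : (⌊Real.logb 2 (1/r)⌋₊ : ℝ) ≤ Real.logb 2 (1/r) := Nat.floor_le hlb0
  have hfu : Real.logb 2 (1/r) < ((⌊Real.logb 2 (1/r)⌋₊ : ℝ) + 1) := Nat.lt_floor_add_one _
  have hrpow : (2:ℝ) ^ (Real.logb 2 (1/r)) = 1/r :=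
    Real.rpow_logb two_pos (by norm_num) (by positivity)
  refine ⟨N, le_add_self.trans (le_refl _), ?_, ?_⟩
  · -- 2^{-N} ≤ r ⟺ 1/r ≤ 2^N
    have h1 : (1/r : ℝ) ≤ (2:ℝ)^(N:ℕ) := by
      calc (1/r:ℝ) = (2:ℝ) ^ (Real.logb 2 (1/r)) := hrpow.symm
      _ ≤ (2:ℝ) ^ ((N:ℕ):ℝ) := by
          apply Real.rpow_le_rpow_of_exponent_le one_le_two
          push_cast [hN]
          linarith
      _ = (2:ℝ)^(N:ℕ) := by rw [Real.rpow_natCast]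
    rw [zpow_neg, zpow_natCast]
    rw [inv_le_comm₀ (by positivity) hr0]
    rwa [one_div] at h1
  · have h2 : ((2:ℝ)^(N:ℕ)) = 2 * (2:ℝ)^(⌊Real.logb 2 (1/r)⌋₊:ℕ) := by
      rw [hN, pow_succ]; ring
    have h3 : ((2:ℝ)^(⌊Real.logb 2 (1/r)⌋₊:ℕ)) ≤ 1/r := by
      calc ((2:ℝ)^(⌊Real.logb 2 (1/r)⌋₊:ℕ)) = (2:ℝ)^((⌊Real.logb 2 (1/r)⌋₊:ℕ):ℝ) :=
            (Real.rpow_natCast 2 _).symm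
      _ ≤ (2:ℝ) ^ (Real.logb 2 (1/r)) :=
          Real.rpow_le_rpow_of_exponent_le one_le_two hfl
      _ = 1/r := hrpow
    rw [h2]
    rw [div_eq_mul_one_div 2 r]
    nlinarith

set_option maxHeartbeats 2000000 in
/-- a compact, uniformly sparse set `X ⊆ B(0,1/2)` has covering numbers
`N(X,r) ≤ C' r^{-ε'}` for every `ε' > 0`. -/
theorem statement2 (d : ℕ) (X : Set (EuclideanSpace ℝ (Fin d)))
    (hXc : IsCompact X) (hXb : X ⊆ closedBall 0 (1/2))
    (hsparse : ∀ ε > (0:ℝ), ∃ C : ℕ, ∀ N : ℕ, C ≤ N → ∀ x ∈ X,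
      (((Finset.Icc 1 N).filter (fun k : ℕ =>
        (X ∩ (closedBall x ((2:ℝ)^(-(k:ℤ))) \ closedBall x ((2:ℝ)^(-(k:ℤ)-1)))).Nonempty)).card : ℝ)
        ≤ ε * N) :
    ∀ ε' > (0:ℝ), ∃ C' > (0:ℝ), ∀ r ∈ Set.Ioo (0:ℝ) 1,
      ∃ (n : ℕ) (f : Fin n → EuclideanSpace ℝ (Fin d)),
        X ⊆ (⋃ i, closedCube (f i) r) ∧ (n : ℝ) ≤ C' * r ^ (-ε') := by
  intro ε' hε'
  obtain ⟨c, hc, hcover⟩ := ballCover d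
  have hc1 : (1:ℝ) ≤ c := by exact_mod_cast hc
  have he1 : (1:ℝ) ≤ Real.exp 1 := Real.one_le_exp (by norm_num)
  set a : ℝ := 4 * Real.exp 1 * c with ha
  have ha1 : 1 ≤ a := by nlinarith
  set β : ℝ := (2:ℝ) ^ (ε'/2 : ℝ) with hβ
  have hβ1 : 1 < β := by
    rw [hβ]
    exact (Real.one_lt_rpow_iff_of_pos two_pos).mpr (Or.inl ⟨one_lt_two, by positivity⟩)
  obtain ⟨ε, hε0, hε1, hεb⟩ := eps_choice a β ha1 hβ1
  obtain ⟨C, hC⟩ := hsparse ε hε0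
  set N₁ : ℕ := max C ⌈(2:ℝ)/ε⌉₊ with hN₁
  obtain ⟨Cb, hCb0, hCb⟩ := nat_le_geom β hβ1
  set D : ℝ := (c:ℝ)^N₁ + (c:ℝ)*Cb with hD
  have hD0 : 0 < D := by positivity
  refine ⟨(2:ℝ)^d * D * (2:ℝ)^(ε':ℝ), by positivity, ?_⟩
  intro r hr
  obtain ⟨hr0, hr1⟩ := hr
  obtain ⟨N, hN1, hNr, hN2r⟩ := rN_facts r hr0 hr1
  obtain ⟨S, hSX, hSsep, hScov, hStriv⟩ := exists_maximal_net d c N hN1 X hXb hcover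
  -- the key cardinality bound
  have hcard : (S.card : ℝ) ≤ D * ((2:ℝ)^N) ^ (ε':ℝ) := by
    have h2N1 : (1:ℝ) ≤ (2:ℝ)^N := one_le_pow₀ one_le_two
    have hmon : (1:ℝ) ≤ ((2:ℝ)^N) ^ (ε':ℝ) := Real.one_le_rpow h2N1 (le_of_lt hε')
    rcases lt_or_ge N N₁ with hcase | hcase
    · -- small N : trivial bound
      have h1 : (S.card : ℝ) ≤ (c:ℝ)^N := by exact_mod_cast hStriv
      have h2 : (c:ℝ)^N ≤ (c:ℝ)^N₁ := pow_le_pow_right₀ hc1 hcase.le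
      have h3 : (c:ℝ)^N₁ ≤ D := by
        rw [hD]
        nlinarith [mul_pos (lt_of_lt_of_le one_pos hc1) hCb0]
      calc (S.card:ℝ) ≤ D := by linarith
      _ ≤ D * ((2:ℝ)^N) ^ (ε':ℝ) := by nlinarith
    · -- large N
      have hCN : C ≤ N := le_trans (le_max_left _ _) hcase
      have hεN2 : (2:ℝ) ≤ ε * N := by
        have h1 : (⌈(2:ℝ)/ε⌉₊ : ℕ) ≤ N := le_trans (le_max_right _ _) hcase
        have h2 : (2:ℝ)/ε ≤ ⌈(2:ℝ)/ε⌉₊ := Nat.le_ceil _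
        have h3 : ((⌈(2:ℝ)/ε⌉₊:ℕ) : ℝ) ≤ (N:ℝ) := by exact_mod_cast h1
        have h4 : (2:ℝ)/ε ≤ N := le_trans h2 h3
        rw [div_le_iff₀ hε0] at h4
        linarith [mul_comm ε (N:ℝ)]
      set m : ℕ := ⌊ε * N⌋₊ with hm
      have hsp' : ∀ y ∈ X, (Wset X N y).card ≤ m := by
        intro y hy
        exact Nat.le_floor (hC N hCN y hy)
      -- top level split
      obtain ⟨f, hf⟩ := hcover 0 (1/2) (by norm_num)
      set Si : Fin c → Finset (EuclideanSpace ℝ (Fin d)) := fun i =>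
        S.filter (fun y => y ∈ closedBall (f i) ((1/2:ℝ)/16)) with hSi
      have hsub : S ⊆ Finset.univ.biUnion Si := by
        intro s hs
        have hsX : s ∈ closedBall (0:EuclideanSpace ℝ (Fin d)) (1/2) := hXb (hSX hs)
        obtain ⟨i, hi⟩ := Set.mem_iUnion.mp (hf hsX)
        exact Finset.mem_biUnion.mpr ⟨i, Finset.mem_univ i, Finset.mem_filter.mpr ⟨hs, hi⟩⟩
      have hSib : ∀ i : Fin c, (Si i).card ≤ Bfun N c 4 m := by
        intro i
        rcases Finset.eq_empty_or_nonempty (Si i) with he | ⟨s', hs'⟩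
        · simp [he]
        · have hres := key d N c m X hcover hsp' (N+1) 4 (by norm_num) (by omega)
            ∅ (Si i) s'
            (fun y hy => hSX (Finset.mem_of_mem_filter _ (Finset.mem_coe.mp hy)))
            hs'
            (fun p hp q hq hpq => hSsep p (Finset.mem_of_mem_filter _ hp)
              q (Finset.mem_of_mem_filter _ hq) hpq)
            (by
              intro y hy
              have h1 : dist y (f i) ≤ (1/2:ℝ)/16 := (Finset.mem_filter.mp hy).2
              have h2 : dist s' (f i) ≤ (1/2:ℝ)/16 := (Finset.mem_filter.mp hs').2
              have h3 := dist_triangle y (f i) s'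
              rw [dist_comm (f i) s'] at h3
              have h4 : (2:ℝ)^(-((4:ℕ):ℤ)) = 1/16 := by norm_num
              rw [h4]
              linarith)
            (by simp)
            (by simp)
          simpa using hres
      have hSc : S.card ≤ c * Bfun N c 4 m := by
        calc S.card ≤ (Finset.univ.biUnion Si).card := Finset.card_le_card hsub
        _ ≤ ∑ i : Fin c, (Si i).card := Finset.card_biUnion_le
        _ ≤ ∑ _i : Fin c, Bfun N c 4 m := Finset.sum_le_sum (fun i _ => hSib i)
        _ = c * Bfun N c 4 m := by
            rw [Finset.sum_const, Finset.card_univ, Fintype.card_fin, smul_eq_mul]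
      -- numeric estimate
      have hN0 : (1:ℝ) ≤ (N:ℝ) := by exact_mod_cast hN1
      have hm1 : 1 ≤ m := by
        rw [hm]
        have : (1:ℕ) ≤ ⌊ε * N⌋₊ := Nat.le_floor (by push_cast; linarith)
        exact this
      have hmεN : (m:ℝ) ≤ ε * N := Nat.floor_le (by positivity)
      have hmlow : ε * N - 1 < (m:ℝ) := Nat.sub_one_lt_floor _
      have hm2 : ε * N / 2 ≤ (m:ℝ) := by linarith
      have hm0 : (0:ℝ) < m := by
        have : (0:ℝ) < ε * N / 2 := by positivity
        linarith
      have hmx : (m:ℝ) ≤ (c:ℝ)*(N+1) := by nlinarith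
      have hBle := Bfun_le_real N c 4 m hm1 hmx
      set K : ℝ := a/ε with hK
      have hK1 : (1:ℝ) ≤ K := by
        rw [hK, le_div_iff₀ hε0]
        linarith
      have hbase : Real.exp 1 * ((c:ℝ)*(N+1)) / m ≤ K := by
        rw [div_le_iff₀ hm0, hK, ha]
        have hecN : Real.exp 1 * ((c:ℝ)*(N+1)) ≤ Real.exp 1 * (c:ℝ) * (2*N) := by
          nlinarith
        have h5 : 4 * Real.exp 1 * (c:ℝ) / ε * m ≥ 4 * Real.exp 1 * (c:ℝ) / ε * (ε * N / 2) := by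
          apply mul_le_mul_of_nonneg_left hm2 (by positivity)
        have h6 : 4 * Real.exp 1 * (c:ℝ) / ε * (ε * N / 2) = Real.exp 1 * (c:ℝ) * (2*N) := by
          field_simp
          ring
        linarith
      have hbase0 : (0:ℝ) ≤ Real.exp 1 * ((c:ℝ)*(N+1)) / m := by positivity
      have hpow1 : (Real.exp 1 * ((c:ℝ)*(N+1)) / m)^m ≤ K^m := pow_le_pow_left₀ hbase0 hbase m
      have hpow2 : K^m ≤ β^N := by
        have hK0 : (0:ℝ) ≤ K := by linarith
        calc K^m = K ^ ((m:ℕ):ℝ) := (Real.rpow_natCast K m).symm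
        _ ≤ K ^ (ε * N) := Real.rpow_le_rpow_of_exponent_le hK1 hmεN
        _ = (K ^ (ε:ℝ)) ^ ((N:ℕ):ℝ) := by rw [← Real.rpow_mul hK0]
        _ = (K ^ (ε:ℝ)) ^ (N:ℕ) := Real.rpow_natCast _ N
        _ ≤ β^N := pow_le_pow_left₀ (Real.rpow_nonneg hK0 _) hεb N
      have hmN : (m:ℝ) + 1 ≤ (N:ℝ) + 1 := by nlinarith
      have hβN0 : (0:ℝ) < β^N := by positivity
      have hfin : (S.card:ℝ) ≤ (c:ℝ) * Cb * (β^N * β^N) := by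
        have h7 : (S.card : ℝ) ≤ (c:ℝ) * Bfun N c 4 m := by exact_mod_cast hSc
        have h8 : (Bfun N c 4 m : ℝ) ≤ ((m:ℝ)+1) * K^m := by
          calc (Bfun N c 4 m : ℝ) ≤ ((m:ℝ)+1) * (Real.exp 1 * ((c:ℝ)*(N+1)) / m)^m := by
                have := hBle; push_cast at this ⊢; linarith
          _ ≤ ((m:ℝ)+1) * K^m := by
              apply mul_le_mul_of_nonneg_left hpow1 (by positivity)
        have h9 : ((m:ℝ)+1) * K^m ≤ (Cb * β^N) * β^N := by
          have hKm0 : (0:ℝ) ≤ K^m := by positivity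
          have h10 : ((m:ℝ)+1) ≤ Cb * β^N := le_trans hmN (hCb N)
          have h11 : ((m:ℝ)+1) * K^m ≤ (Cb * β^N) * K^m :=
            mul_le_mul_of_nonneg_right h10 hKm0
          have h12 : (Cb * β^N) * K^m ≤ (Cb * β^N) * β^N := by
            apply mul_le_mul_of_nonneg_left hpow2 (by positivity)
          linarith
        calc (S.card:ℝ) ≤ (c:ℝ) * Bfun N c 4 m := h7
        _ ≤ (c:ℝ) * (((m:ℝ)+1) * K^m) := by
            apply mul_le_mul_of_nonneg_left _ (by positivity)
            exact le_trans h8 (le_refl _)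
        _ ≤ (c:ℝ) * ((Cb * β^N) * β^N) := by
            apply mul_le_mul_of_nonneg_left h9 (by positivity)
        _ = (c:ℝ) * Cb * (β^N * β^N) := by ring
      have hββ : β^N * β^N = ((2:ℝ)^N) ^ (ε':ℝ) := by
        rw [← mul_pow, hβ]
        rw [← Real.rpow_natCast ((2:ℝ) ^ (ε'/2:ℝ) * (2:ℝ) ^ (ε'/2:ℝ)) N]
        rw [← Real.rpow_add two_pos]
        have h13 : (ε'/2 + ε'/2) = ε' := by ring
        rw [h13, ← Real.rpow_natCast (2:ℝ) N, ← Real.rpow_mul (by norm_num)]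
        rw [← Real.rpow_mul (by norm_num)]
        rw [mul_comm ε' (N:ℝ)]
      rw [hββ] at hfin
      have h14 : (c:ℝ) * Cb ≤ D := by
        rw [hD]
        have : (0:ℝ) ≤ (c:ℝ)^N₁ := by positivity
        linarith
      calc (S.card:ℝ) ≤ (c:ℝ)*Cb * (((2:ℝ)^N) ^ (ε':ℝ)) := hfin
      _ ≤ D * (((2:ℝ)^N) ^ (ε':ℝ)) := by
          apply mul_le_mul_of_nonneg_right h14 (by positivity)
  -- construct the cube cover
  set T := S ×ˢ (Finset.univ : Finset (Fin d → Bool)) with hT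
  have hTcard : T.card = S.card * 2^d := by
    rw [hT, Finset.card_product, Finset.card_univ]
    congr 1
    rw [Fintype.card_fun]
    simp
  set g : Fin T.card → EuclideanSpace ℝ (Fin d) := fun i =>
    (fun pr : EuclideanSpace ℝ (Fin d) × (Fin d → Bool) =>
      (WithLp.toLp 2 (fun ii => if pr.2 ii then pr.1 ii else pr.1 ii - r) : EuclideanSpace ℝ (Fin d)))
    ((T.equivFin.symm i : T) : EuclideanSpace ℝ (Fin d) × (Fin d → Bool)) with hg
  refine ⟨T.card, g, ?_, ?_⟩
  · -- coverage
    intro x hx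
    obtain ⟨s, hsS, hds⟩ := hScov x hx
    have hdsr : dist x s ≤ r := le_trans hds.le hNr
    obtain ⟨v, hv⟩ := cube_of_ball s r hr0 x hdsr
    have hmemT : (s, v) ∈ T := by
      rw [hT, Finset.mem_product]
      exact ⟨hsS, Finset.mem_univ v⟩
    refine Set.mem_iUnion.mpr ⟨T.equivFin ⟨(s,v), hmemT⟩, ?_⟩
    rw [hg]
    simp only [Equiv.symm_apply_apply]
    exact hv
  · -- counting
    have h15 : ((2:ℝ)^N) ^ (ε':ℝ) ≤ (2/r) ^ (ε':ℝ) :=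
      Real.rpow_le_rpow (by positivity) hN2r (le_of_lt hε')
    have h16 : (2/r:ℝ) ^ (ε':ℝ) = (2:ℝ)^(ε':ℝ) * r ^ (-ε') := by
      rw [Real.div_rpow (by norm_num) hr0.le, Real.rpow_neg hr0.le, div_eq_mul_inv]
    have h17 : (T.card : ℝ) = (S.card:ℝ) * 2^d := by
      rw [hTcard]; push_cast; ring
    rw [h17]
    have h18 : (S.card:ℝ) * 2^d ≤ (D * ((2:ℝ)^N) ^ (ε':ℝ)) * 2^d := by
      apply mul_le_mul_of_nonneg_right hcard (by positivity)
    have h19 : (D * ((2:ℝ)^N) ^ (ε':ℝ)) * 2^d ≤ (D * ((2/r:ℝ) ^ (ε':ℝ))) * 2^d := by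
      have := mul_le_mul_of_nonneg_left h15 hD0.le
      apply mul_le_mul_of_nonneg_right this (by positivity)
    calc (S.card:ℝ) * 2^d ≤ (D * ((2/r:ℝ) ^ (ε':ℝ))) * 2^d := le_trans h18 h19
    _ = (2:ℝ)^d * D * (2:ℝ)^(ε':ℝ) * r ^ (-ε') := by
        rw [h16]; ring
end

section
/- Let $\mu$ be a probability measure supported on a compact set $X\subset B(\mathbf{0},1/2)\subset\mathbb{R}^d$ with doubling constant $D$, i.e. $\mu(B(x,2r))\leq D\mu(B(x,r))$ for all $x\in X$, $r>0$. Let $x\in X$ and $N\in\mathbb{N}$, and suppose that the set $W(X,x)\cap[1,N]=\{k\in[1,N]: X\cap(B(x,2^{-k})\setminus B(x,2^{-k-1}))\neq\emptyset\}$ has cardinality at most $\epsilon N$. Then $\mu(B(x,2^{-N}))\geq D^{-\epsilon N - 1}$. -/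
open Metric MeasureTheory
open scoped Classical

/-- mass decay for a doubling measure on a sparse set. If `μ` is a
probability measure supported on a compact `X ⊆ B(0,1/2)` with doubling constant
`D`, `x ∈ X`, and at most `ε N` of the dyadic annuli `B(x,2^{-k}) \ B(x,2^{-k-1})`,
`1 ≤ k ≤ N`, meet `X`, then `μ(B(x,2^{-N})) ≥ D^{-εN-1}`. -/
theorem statement4 (d : ℕ) (X : Set (EuclideanSpace ℝ (Fin d)))
    (hXc : IsCompact X) (hXb : X ⊆ closedBall 0 (1/2))
    (μ : Measure (EuclideanSpace ℝ (Fin d))) (hprob : IsProbabilityMeasure μ)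
    (hsupp : μ Xᶜ = 0) (D : ℝ) (hD : 1 ≤ D)
    (hdouble : ∀ x ∈ X, ∀ r : ℝ, 0 < r →
      μ (closedBall x (2 * r)) ≤ ENNReal.ofReal D * μ (closedBall x r))
    (x : EuclideanSpace ℝ (Fin d)) (hx : x ∈ X) (N : ℕ) (ε : ℝ)
    (hsparse : (((Finset.Icc 1 N).filter (fun k : ℕ =>
        (X ∩ (closedBall x ((2:ℝ)^(-(k:ℤ))) \ closedBall x ((2:ℝ)^(-(k:ℤ)-1)))).Nonempty)).card : ℝ)
        ≤ ε * N) :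
    ENNReal.ofReal (D ^ (-(ε * N) - 1)) ≤ μ (closedBall x ((2:ℝ)^(-(N:ℤ)))) := by
  have hD0 : (0:ℝ) < D := lt_of_lt_of_le one_pos hD
  set P : ℕ → Prop := fun k =>
    (X ∩ (closedBall x ((2:ℝ)^(-(k:ℤ))) \ closedBall x ((2:ℝ)^(-(k:ℤ)-1)))).Nonempty with hP
  set f : ℕ → ENNReal := fun k => μ (closedBall x ((2:ℝ)^(-(k:ℤ)))) with hf
  -- X ⊆ B(x,1)
  have hX1 : X ⊆ closedBall x 1 := by
    intro y hy
    have h1 := hXb hy; have h2 := hXb hx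
    rw [mem_closedBall] at *
    calc dist y x ≤ dist y 0 + dist 0 x := dist_triangle _ _ _
      _ ≤ 1/2 + 1/2 := by rw [dist_comm 0 x]; linarith
      _ = 1 := by norm_num
  -- sets contained in X ∪ Xᶜ trick
  have hmeas : ∀ A B : Set (EuclideanSpace ℝ (Fin d)), X ∩ A ⊆ B → μ A ≤ μ B := by
    intro A B hAB
    calc μ A ≤ μ (B ∪ Xᶜ) := measure_mono (by
          intro y hy
          by_cases h : y ∈ X
          · exact Or.inl (hAB ⟨h, hy⟩)
          · exact Or.inr h)
      _ ≤ μ B + μ Xᶜ := measure_union_le _ _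
      _ = μ B := by rw [hsupp, add_zero]
  have hf0 : f 0 = 1 := by
    have hge : (1:ENNReal) ≤ f 0 := by
      have h1 : μ Set.univ ≤ μ (closedBall x ((2:ℝ)^(-(0:ℕ):ℤ))) :=
        hmeas Set.univ _ (by intro y hy; simpa using hX1 hy.1)
      rw [measure_univ] at h1
      simpa [hf] using h1
    exact le_antisymm prob_le_one hge
  -- doubling step
  have hstep : ∀ k : ℕ, f k ≤ ENNReal.ofReal D * f (k+1) := by
    intro k
    have hr : (0:ℝ) < (2:ℝ)^(-((k:ℤ)+1)) := zpow_pos two_pos _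
    have h2r : (2:ℝ) * (2:ℝ)^(-((k:ℤ)+1)) = (2:ℝ)^(-(k:ℤ)) := by
      rw [show -(k:ℤ) = (-((k:ℤ)+1)) + 1 by ring, zpow_add_one₀ (two_ne_zero)]
      ring
    have := hdouble x hx _ hr
    rw [h2r] at this
    show μ (closedBall x ((2:ℝ)^(-(k:ℤ)))) ≤ ENNReal.ofReal D * μ (closedBall x ((2:ℝ)^(-((k+1:ℕ):ℤ))))
    rw [Nat.cast_add, Nat.cast_one]
    exact this
  -- equal step when annulus misses X
  have heq : ∀ k : ℕ, ¬ P k → f k ≤ f (k+1) := by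
    intro k hk
    apply hmeas
    intro y hy
    rcases hy with ⟨hyX, hyB⟩
    by_contra hnot
    exact hk ⟨y, hyX, hyB, by
      simpa [show -(k:ℤ)-1 = -((k+1:ℕ):ℤ) by push_cast; ring] using hnot⟩
  -- main induction
  have hind : ∀ n : ℕ,
      f 1 ≤ (ENNReal.ofReal D)^(((Finset.Icc 1 n).filter P).card) * f (n+1) := by
    intro n
    induction n with
    | zero => simp
    | succ n ih =>
      have hIcc : Finset.Icc 1 (n+1) = insert (n+1) (Finset.Icc 1 n) := by
        ext k; simp [Finset.mem_Icc]; omega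
      by_cases hpn : P (n+1)
      · have hcard : ((Finset.Icc 1 (n+1)).filter P).card
            = ((Finset.Icc 1 n).filter P).card + 1 := by
          rw [hIcc, Finset.filter_insert, if_pos hpn, Finset.card_insert_of_notMem]
          simp
        rw [hcard]
        calc f 1 ≤ (ENNReal.ofReal D)^(((Finset.Icc 1 n).filter P).card) * f (n+1) := ih
          _ ≤ (ENNReal.ofReal D)^(((Finset.Icc 1 n).filter P).card) *
              (ENNReal.ofReal D * f (n+2)) := by
            exact mul_le_mul_right (hstep (n+1)) _
          _ = (ENNReal.ofReal D)^(((Finset.Icc 1 n).filter P).card + 1) * f (n+2) := by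
            ring
      · have hcard : ((Finset.Icc 1 (n+1)).filter P).card
            = ((Finset.Icc 1 n).filter P).card := by
          rw [hIcc, Finset.filter_insert, if_neg hpn]
        rw [hcard]
        exact ih.trans (mul_le_mul_right (heq (n+1) hpn) _)
  -- put things together
  have hcard_nonneg : (0:ℝ) ≤ ε * N := le_trans (Nat.cast_nonneg _) hsparse
  rcases Nat.eq_zero_or_pos N with hN | hN
  · subst hN
    show ENNReal.ofReal _ ≤ f 0
    rw [hf0, ENNReal.ofReal_le_one]
    push_cast at hcard_nonneg ⊢
    calc D ^ (-(ε * (0:ℝ)) - 1) ≤ D ^ (0:ℝ) :=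
          Real.rpow_le_rpow_of_exponent_le hD (by linarith)
      _ = 1 := Real.rpow_zero D
  · obtain ⟨n, rfl⟩ : ∃ n, N = n + 1 := ⟨N - 1, (Nat.succ_pred_eq_of_pos hN).symm⟩
    set m : ℕ := ((Finset.Icc 1 n).filter P).card with hm
    have hmN : (m:ℝ) ≤ ε * (n+1:ℕ) := by
      refine le_trans ?_ hsparse
      exact_mod_cast Finset.card_le_card (Finset.filter_subset_filter _
        (Finset.Icc_subset_Icc_right (Nat.le_succ n)))
    have hchain : (1:ENNReal) ≤ (ENNReal.ofReal D)^(m+1) * f (n+1) := by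
      calc (1:ENNReal) = f 0 := hf0.symm
        _ ≤ ENNReal.ofReal D * f 1 := hstep 0
        _ ≤ ENNReal.ofReal D * ((ENNReal.ofReal D)^m * f (n+1)) :=
            mul_le_mul_right (hind n) _
        _ = (ENNReal.ofReal D)^(m+1) * f (n+1) := by ring
    have hDne0 : (ENNReal.ofReal D)^(m+1) ≠ 0 := by
      apply pow_ne_zero; simp [ENNReal.ofReal_eq_zero]; linarith
    have hDneT : (ENNReal.ofReal D)^(m+1) ≠ ⊤ := by
      apply ENNReal.pow_ne_top; exact ENNReal.ofReal_ne_top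
    have hinv : ((ENNReal.ofReal D)^(m+1))⁻¹ ≤ f (n+1) := by
      calc ((ENNReal.ofReal D)^(m+1))⁻¹
          = ((ENNReal.ofReal D)^(m+1))⁻¹ * 1 := (mul_one _).symm
        _ ≤ ((ENNReal.ofReal D)^(m+1))⁻¹ * ((ENNReal.ofReal D)^(m+1) * f (n+1)) :=
            mul_le_mul_right hchain _
        _ = f (n+1) := by rw [← mul_assoc, ENNReal.inv_mul_cancel hDne0 hDneT, one_mul]
    refine le_trans ?_ hinv
    have h1 : ((ENNReal.ofReal D)^(m+1))⁻¹ = ENNReal.ofReal ((D^(m+1))⁻¹) := by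
      rw [← ENNReal.ofReal_pow hD0.le, ENNReal.ofReal_inv_of_pos (pow_pos hD0 _)]
    rw [h1]
    apply ENNReal.ofReal_le_ofReal
    have : D ^ (-(ε * (n+1:ℕ)) - 1) ≤ D ^ (-((m:ℝ)+1)) :=
      Real.rpow_le_rpow_of_exponent_le hD (by linarith)
    refine this.trans_eq ?_
    rw [Real.rpow_neg hD0.le, show ((m:ℝ)+1) = ((m+1:ℕ):ℝ) by push_cast; ring,
      Real.rpow_natCast]
end

section
/- Let $c_4,c_5$ be nonzero real numbers and $q$ a nonzero rational. Consider the plane curve $C(t)=(c_4\,3^t,\ c_5\,5^{qt})$ for $t$ in a compact interval $I$. Then $C$ has nowhere vanishing curvature: for all $t\in I$, the vectors $C'(t)$ and $C''(t)$ are linearly independent, i.e. $C_1'(t)C_2''(t)-C_2'(t)C_1''(t)\neq 0$. -/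
private lemma expder (c k : ℝ) :
    deriv (fun t => c * Real.exp (k * t)) = fun t => c * k * Real.exp (k * t) := by
  funext t
  have h : HasDerivAt (fun t => c * Real.exp (k * t)) (c * k * Real.exp (k * t)) t := by
    have h1 : HasDerivAt (fun t : ℝ => k * t) k t := by
      simpa using (hasDerivAt_id t).const_mul k
    have h2 := (Real.hasDerivAt_exp (k * t)).comp t h1
    have := h2.const_mul c
    exact this.congr_deriv (by ring)
  exact h.deriv

private lemma keylem (q : ℚ) (hq : q ≠ 0) : (q : ℝ) * Real.log 5 ≠ Real.log 3 := by
  intro h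
  have hden : (0 : ℝ) < (q.den : ℝ) := by positivity
  have hq' : ((q : ℝ)) * (q.den : ℝ) = (q.num : ℝ) := by
    rw [← Rat.cast_natCast, ← Rat.cast_mul, Rat.mul_den_eq_num]
    exact Rat.cast_intCast q.num
  have hnum : ((q.num : ℝ)) * Real.log 5 = (q.den : ℝ) * Real.log 3 :=
    calc ((q.num : ℝ)) * Real.log 5 = ((q : ℝ) * (q.den:ℝ)) * Real.log 5 := by rw [hq']
    _ = ((q : ℝ) * Real.log 5) * (q.den:ℝ) := by ring
    _ = Real.log 3 * (q.den:ℝ) := by rw [h]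
    _ = (q.den : ℝ) * Real.log 3 := by ring
  have hlog5 : (0:ℝ) < Real.log 5 := Real.log_pos (by norm_num)
  have hlog3 : (0:ℝ) < Real.log 3 := Real.log_pos (by norm_num)
  have hnpos : 0 < q.num := by
    by_contra hn
    push_neg at hn
    have h1 : ((q.num:ℝ)) * Real.log 5 ≤ 0 :=
      mul_nonpos_of_nonpos_of_nonneg (by exact_mod_cast hn) hlog5.le
    have h2 : (0:ℝ) < (q.den:ℝ) * Real.log 3 := mul_pos hden hlog3
    linarith
  set n := q.num.toNat with hn
  have hcast : (q.num : ℝ) = (n : ℝ) := by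
    rw [hn]; exact_mod_cast (Int.toNat_of_nonneg hnpos.le).symm
  have hlogeq : Real.log ((5:ℝ) ^ n) = Real.log ((3:ℝ) ^ q.den) := by
    rw [Real.log_pow, Real.log_pow]
    rw [hcast] at hnum
    push_cast
    linarith
  have hpow : (5:ℝ) ^ n = (3:ℝ) ^ q.den := by
    have h5 : (0:ℝ) < (5:ℝ) ^ n := by positivity
    have h3 : (0:ℝ) < (3:ℝ) ^ q.den := by positivity
    have := congrArg Real.exp hlogeq
    rwa [Real.exp_log h5, Real.exp_log h3] at this
  have hnat : (5:ℕ) ^ n = 3 ^ q.den := by exact_mod_cast hpow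
  have hn0 : 0 < n := by rw [hn]; omega
  have h5dvd : (5:ℕ) ∣ 3 ^ q.den := by
    rw [← hnat]
    exact dvd_pow_self 5 hn0.ne'
  have := Nat.Prime.dvd_of_dvd_pow (by norm_num : Nat.Prime 5) h5dvd
  omega

/-- the plane curve `t ↦ (c₄ 3^t, c₅ 5^{qt})`, with `c₄, c₅ ≠ 0` and
`q` a nonzero rational, has nowhere vanishing curvature: the Wronskian
`C₁' C₂'' - C₂' C₁''` never vanishes. -/
theorem statement11 (c₄ c₅ : ℝ) (hc₄ : c₄ ≠ 0) (hc₅ : c₅ ≠ 0) (q : ℚ) (hq : q ≠ 0)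
    (A B : ℝ) (C₁ C₂ : ℝ → ℝ)
    (hC₁ : C₁ = fun t => c₄ * (3 : ℝ) ^ t)
    (hC₂ : C₂ = fun t => c₅ * (5 : ℝ) ^ ((q : ℝ) * t)) :
    ∀ t ∈ Set.Icc A B,
      deriv C₁ t * deriv (deriv C₂) t - deriv C₂ t * deriv (deriv C₁) t ≠ 0 := by
  intro t _
  set k1 := Real.log 3 with hk1
  set k2 := (q : ℝ) * Real.log 5 with hk2
  have e1 : C₁ = fun t => c₄ * Real.exp (k1 * t) := by
    funext s
    rw [hC₁]
    simp only [Real.rpow_def_of_pos (by norm_num : (0:ℝ) < 3)]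
    rw [hk1]
  have e2 : C₂ = fun t => c₅ * Real.exp (k2 * t) := by
    funext s
    rw [hC₂]
    simp only [Real.rpow_def_of_pos (by norm_num : (0:ℝ) < 5)]
    ring_nf
    rw [hk2]
    ring_nf
  rw [e1, e2, expder, expder, expder, expder]
  have hk1ne : k1 ≠ 0 := ne_of_gt (Real.log_pos (by norm_num))
  have hk2ne : k2 ≠ 0 := by
    apply mul_ne_zero
    · exact_mod_cast hq
    · exact ne_of_gt (Real.log_pos (by norm_num))
  have hkey : k2 ≠ k1 := keylem q hq
  have he1 : Real.exp (k1 * t) ≠ 0 := Real.exp_ne_zero _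
  have he2 : Real.exp (k2 * t) ≠ 0 := Real.exp_ne_zero _
  have hfac : c₄ * k1 * Real.exp (k1 * t) * (c₅ * k2 * k2 * Real.exp (k2 * t)) -
      c₅ * k2 * Real.exp (k2 * t) * (c₄ * k1 * k1 * Real.exp (k1 * t)) =
      c₄ * c₅ * k1 * k2 * (k2 - k1) * (Real.exp (k1 * t) * Real.exp (k2 * t)) := by
    ring
  rw [hfac]
  exact mul_ne_zero (mul_ne_zero (mul_ne_zero (mul_ne_zero (mul_ne_zero hc₄ hc₅) hk1ne) hk2ne)
    (sub_ne_zero_of_ne hkey)) (mul_ne_zero he1 he2)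
end
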